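/- arXiv:1801.08889 — 5 statements merged into one kernel-verified Lean document; each statement's English description precedes it below -/
import Mathlib

section
/- For k > 0, the 3×3 complex matrix M = [[1, -cos k, 0], [0, cos k, -cos k], [i, sin k, sin k]] is invertible if and only if k is not of the form (2n+1)π/2 for some natural number n. -/
open Complex Real Matrix

theorem M_invertible_iff (k : ℝ) (hk : 0 < k) :
    IsUnit (!![(1 : ℂ), -Real.cos k, 0;
               0, Real.cos k, -Real.cos k;
               Complex.I, Real.sin k, Real.sin k]) ↔
      ¬ ∃ n : ℕ, k = (2 * n + 1) * Real.pi / 2 := by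
  rw [Matrix.isUnit_iff_isUnit_det, isUnit_iff_ne_zero, Matrix.det_fin_three]
  norm_num
  have hdet : Complex.cos ↑k * Complex.sin ↑k + Complex.cos ↑k * Complex.sin ↑k +
      Complex.cos ↑k * Complex.cos ↑k * Complex.I =
      Complex.ofReal (2 * Real.cos k * Real.sin k) +
        Complex.ofReal (Real.cos k ^ 2) * Complex.I := by
    rw [← Complex.ofReal_cos, ← Complex.ofReal_sin]
    push_cast
    ring
  refine Iff.trans (not_congr (Eq.congr_left (y := Complex.cos ↑k * Complex.sin ↑k +
    Complex.cos ↑k * Complex.sin ↑k + Complex.cos ↑k * Complex.cos ↑k * Complex.I) ?_)) ?_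
  · simp
  rw [hdet]
  constructor
  · rintro h n rfl
    apply h
    have : Real.cos ((2 * n + 1) * Real.pi / 2) = 0 := by
      rw [Real.cos_eq_zero_iff]; exact ⟨n, by push_cast; ring⟩
    simp [this]
  · intro h hd
    rw [Complex.ext_iff] at hd
    simp only [Complex.add_re, Complex.ofReal_re, Complex.mul_re, Complex.I_re,
      Complex.I_im, Complex.ofReal_im, Complex.add_im, Complex.mul_im,
      Complex.zero_re, Complex.zero_im] at hd
    have hc : Real.cos k ^ 2 = 0 := by linarith [hd.2]
    have hc0 : Real.cos k = 0 := by nlinarith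
    rw [Real.cos_eq_zero_iff] at hc0
    obtain ⟨m, hm⟩ := hc0
    have hm0 : 0 ≤ m := by
      by_contra hneg
      push_neg at hneg
      have : (2 * (m : ℝ) + 1) ≤ -1 := by
        have : (m : ℝ) ≤ -1 := by exact_mod_cast (by omega : m ≤ -1)
        linarith
      nlinarith [Real.pi_pos, hk, hm]
    lift m to ℕ using hm0
    exact h m (by push_cast at hm ⊢; linarith)
end

section
/- If k = (2n+1)π/2 for some n ∈ ℕ, then the vector (R, A, B) = (-1, 0, 0) need not be the only solution: the kernel of M = [[1, -cos k, 0], [0, cos k, -cos k], [i, sin k, sin k]] is one-dimensional, spanned by (0, 1, -1). -/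
open Complex Real Matrix

theorem kernel_of_M (k : ℝ) (n : ℕ) (hk : k = (2 * n + 1) * Real.pi / 2) :
    ∀ v : Fin 3 → ℂ,
      (!![(1 : ℂ), -Real.cos k, 0;
          0, Real.cos k, -Real.cos k;
          Complex.I, Real.sin k, Real.sin k]).mulVec v = 0 ↔
        ∃ c : ℂ, v = c • ![0, 1, -1] := by
  have hcos : Real.cos k = 0 := by
    rw [hk, Real.cos_eq_zero_iff]
    exact ⟨n, by push_cast; ring⟩
  have hsinR : Real.sin k ≠ 0 := by
    intro h
    have := Real.sin_sq_add_cos_sq k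
    rw [h, hcos] at this; norm_num at this
  have hsin : (Real.sin k : ℂ) ≠ 0 := by exact_mod_cast hsinR
  intro v
  constructor
  · intro h
    have h0 := congrFun h 0
    have h2 := congrFun h 2
    simp [mulVec, dotProduct, Fin.sum_univ_three, hcos] at h0 h2
    have h2' : (Real.sin k : ℂ) * (v 1 + v 2) = 0 := by
      rw [h0] at h2; push_cast; linear_combination h2
    have h12 : v 1 + v 2 = 0 := by
      rcases mul_eq_zero.mp h2' with h' | h'
      · exact absurd h' hsin
      · exact h'
    refine ⟨v 1, ?_⟩
    funext i
    fin_cases i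
    · simpa using h0
    · simp
    · simp
      linear_combination h12
  · rintro ⟨c, rfl⟩
    funext i
    fin_cases i <;> simp [mulVec, dotProduct, Fin.sum_univ_three, hcos] <;> ring
end

section
/- Define ℛ(ε,k) = (cos k · cos(k(1+ε)) + i sin(k(2+ε)))/(cos k · cos(k(1+ε)) - i sin(k(2+ε))). Then for every μ ∈ ℝ, ℛ(ε, π/2 - ε(π/4) + ε²μ) converges, as ε → 0, to g(μ) = (π² + i(32μ - 4π))/(π² - i(32μ - 4π)). -/
open Complex Real Filter

noncomputable def RR (ε k : ℝ) : ℂ :=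
  ((Real.cos k * Real.cos (k * (1 + ε)) : ℂ) + Complex.I * Real.sin (k * (2 + ε))) /
  ((Real.cos k * Real.cos (k * (1 + ε)) : ℂ) - Complex.I * Real.sin (k * (2 + ε)))

noncomputable def Sfun (x : ℝ) : ℝ := if x = 0 then 1 else Real.sin x / x

lemma sin_eq_mul_Sfun (x : ℝ) : Real.sin x = x * Sfun x := by
  unfold Sfun
  split_ifs with h
  · simp [h]
  · field_simp

lemma tendsto_Sfun : Tendsto Sfun (nhds 0) (nhds 1) := by
  have h : Tendsto (fun x : ℝ => Real.sin x / x) (nhdsWithin 0 {0}ᶜ) (nhds 1) := by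
    have := Real.hasDerivAt_sin 0
    rw [hasDerivAt_iff_tendsto_slope] at this
    simpa [slope_fun_def, Real.sin_zero, Real.cos_zero, div_eq_inv_mul] using this
  have h2 : Tendsto Sfun (nhdsWithin 0 {0}ᶜ) (nhds (Sfun 0)) := by
    rw [show Sfun 0 = 1 by simp [Sfun]]
    refine h.congr' ?_
    filter_upwards [self_mem_nhdsWithin] with x hx
    simp [Sfun, (show x ≠ 0 from hx)]
  have : ContinuousAt Sfun 0 := continuousWithinAt_compl_self.mp h2
  simpa [Sfun] using this.tendsto

noncomputable def Na (μ ε : ℝ) : ℂ :=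
  -(((Real.pi/4 - ε*μ) * Sfun (ε * (Real.pi/4 - ε*μ)) *
     ((Real.pi/4 + ε*(μ - Real.pi/4) + ε^2*μ) *
      Sfun (ε * (Real.pi/4 + ε*(μ - Real.pi/4) + ε^2*μ))) : ℝ) : ℂ)
  - Complex.I * (((2*μ - Real.pi/4 + ε*μ) * Sfun (ε^2 * (2*μ - Real.pi/4 + ε*μ)) : ℝ) : ℂ)

noncomputable def Da (μ ε : ℝ) : ℂ :=
  -(((Real.pi/4 - ε*μ) * Sfun (ε * (Real.pi/4 - ε*μ)) *
     ((Real.pi/4 + ε*(μ - Real.pi/4) + ε^2*μ) *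
      Sfun (ε * (Real.pi/4 + ε*(μ - Real.pi/4) + ε^2*μ))) : ℝ) : ℂ)
  + Complex.I * (((2*μ - Real.pi/4 + ε*μ) * Sfun (ε^2 * (2*μ - Real.pi/4 + ε*μ)) : ℝ) : ℂ)

lemma key (μ : ℝ) {ε : ℝ} (hε : ε ≠ 0) :
    RR ε (Real.pi / 2 - ε * (Real.pi / 4) + ε ^ 2 * μ) = Na μ ε / Da μ ε := by
  have h1 : Real.cos (Real.pi / 2 - ε * (Real.pi / 4) + ε ^ 2 * μ)
      = ε * (Real.pi/4 - ε*μ) * Sfun (ε * (Real.pi/4 - ε*μ)) := by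
    rw [show Real.pi / 2 - ε * (Real.pi / 4) + ε ^ 2 * μ
        = Real.pi/2 - ε * (Real.pi/4 - ε*μ) by ring,
      Real.cos_pi_div_two_sub, sin_eq_mul_Sfun]
  have h2 : Real.cos ((Real.pi / 2 - ε * (Real.pi / 4) + ε ^ 2 * μ) * (1 + ε))
      = -(ε * (Real.pi/4 + ε*(μ - Real.pi/4) + ε^2*μ) *
          Sfun (ε * (Real.pi/4 + ε*(μ - Real.pi/4) + ε^2*μ))) := by
    rw [show (Real.pi / 2 - ε * (Real.pi / 4) + ε ^ 2 * μ) * (1 + ε)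
        = Real.pi/2 + ε * (Real.pi/4 + ε*(μ - Real.pi/4) + ε^2*μ) by ring,
      Real.cos_add, Real.cos_pi_div_two, Real.sin_pi_div_two, sin_eq_mul_Sfun]
    ring
  have h3 : Real.sin ((Real.pi / 2 - ε * (Real.pi / 4) + ε ^ 2 * μ) * (2 + ε))
      = -(ε^2 * (2*μ - Real.pi/4 + ε*μ) * Sfun (ε^2 * (2*μ - Real.pi/4 + ε*μ))) := by
    rw [show (Real.pi / 2 - ε * (Real.pi / 4) + ε ^ 2 * μ) * (2 + ε)
        = Real.pi + ε^2 * (2*μ - Real.pi/4 + ε*μ) by ring,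
      Real.sin_add, Real.sin_pi, Real.cos_pi, sin_eq_mul_Sfun]
    ring
  have hε2 : ((ε : ℂ))^2 ≠ 0 := pow_ne_zero 2 (Complex.ofReal_ne_zero.mpr hε)
  rw [RR, h1, h2, h3]
  trans ((ε:ℂ)^2 * Na μ ε) / ((ε:ℂ)^2 * Da μ ε)
  · congr 1
    · simp only [Na]; push_cast; ring
    · simp only [Da]; push_cast; ring
  · exact mul_div_mul_left _ _ hε2

theorem RR_tendsto_g (μ : ℝ) :
    Tendsto (fun ε : ℝ => RR ε (Real.pi / 2 - ε * (Real.pi / 4) + ε ^ 2 * μ))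
      (nhdsWithin 0 {0}ᶜ)
      (nhds (((Real.pi ^ 2 : ℂ) + Complex.I * (32 * μ - 4 * Real.pi)) /
             ((Real.pi ^ 2 : ℂ) - Complex.I * (32 * μ - 4 * Real.pi)))) := by
  -- limits of the building blocks
  have hc1 : Tendsto (fun ε : ℝ => ε * (Real.pi/4 - ε*μ)) (nhds 0) (nhds 0) := by
    have : Continuous fun ε : ℝ => ε * (Real.pi/4 - ε*μ) := by continuity
    simpa using this.tendsto 0
  have hc2 : Tendsto (fun ε : ℝ => ε * (Real.pi/4 + ε*(μ - Real.pi/4) + ε^2*μ))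
      (nhds 0) (nhds 0) := by
    have : Continuous fun ε : ℝ => ε * (Real.pi/4 + ε*(μ - Real.pi/4) + ε^2*μ) := by continuity
    simpa using this.tendsto 0
  have hc3 : Tendsto (fun ε : ℝ => ε^2 * (2*μ - Real.pi/4 + ε*μ)) (nhds 0) (nhds 0) := by
    have : Continuous fun ε : ℝ => ε^2 * (2*μ - Real.pi/4 + ε*μ) := by continuity
    simpa using this.tendsto 0
  have hS1 := tendsto_Sfun.comp hc1
  have hS2 := tendsto_Sfun.comp hc2
  have hS3 := tendsto_Sfun.comp hc3
  have ha : Tendsto (fun ε : ℝ => Real.pi/4 - ε*μ) (nhds 0) (nhds (Real.pi/4)) := by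
    have : Continuous fun ε : ℝ => Real.pi/4 - ε*μ := by continuity
    simpa using this.tendsto 0
  have hb : Tendsto (fun ε : ℝ => Real.pi/4 + ε*(μ - Real.pi/4) + ε^2*μ)
      (nhds 0) (nhds (Real.pi/4)) := by
    have : Continuous fun ε : ℝ => Real.pi/4 + ε*(μ - Real.pi/4) + ε^2*μ := by continuity
    simpa using this.tendsto 0
  have hcℝ : Tendsto (fun ε : ℝ => 2*μ - Real.pi/4 + ε*μ) (nhds 0) (nhds (2*μ - Real.pi/4)) := by
    have : Continuous fun ε : ℝ => 2*μ - Real.pi/4 + ε*μ := by continuity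
    simpa using this.tendsto 0
  have hf1 : Tendsto (fun ε : ℝ =>
      (Real.pi/4 - ε*μ) * Sfun (ε * (Real.pi/4 - ε*μ)) *
      ((Real.pi/4 + ε*(μ - Real.pi/4) + ε^2*μ) *
       Sfun (ε * (Real.pi/4 + ε*(μ - Real.pi/4) + ε^2*μ))))
      (nhds 0) (nhds (Real.pi/4 * (Real.pi/4))) := by
    have := ((ha.mul hS1).mul (hb.mul hS2))
    simpa using this
  have hf2 : Tendsto (fun ε : ℝ =>
      (2*μ - Real.pi/4 + ε*μ) * Sfun (ε^2 * (2*μ - Real.pi/4 + ε*μ)))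
      (nhds 0) (nhds (2*μ - Real.pi/4)) := by
    have := hcℝ.mul hS3
    simpa using this
  have hf1C := (Complex.continuous_ofReal.tendsto _).comp hf1
  have hf2C := (Complex.continuous_ofReal.tendsto _).comp hf2
  set NL : ℂ := -((Real.pi/4 * (Real.pi/4) : ℝ) : ℂ)
      - Complex.I * ((2*μ - Real.pi/4 : ℝ) : ℂ) with hNL
  set DL : ℂ := -((Real.pi/4 * (Real.pi/4) : ℝ) : ℂ)
      + Complex.I * ((2*μ - Real.pi/4 : ℝ) : ℂ) with hDL
  have hN : Tendsto (Na μ) (nhds 0) (nhds NL) := by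
    refine Tendsto.congr (fun x => ?_) (hf1C.neg.sub (hf2C.const_mul Complex.I))
    simp only [Na, Function.comp]
  have hD : Tendsto (Da μ) (nhds 0) (nhds DL) := by
    refine Tendsto.congr (fun x => ?_) (hf1C.neg.add (hf2C.const_mul Complex.I))
    simp only [Da, Function.comp]
  have hDLne : DL ≠ 0 := by
    intro h
    have := congrArg Complex.re h
    simp [hDL, Complex.mul_re] at this
  have htd : ((Real.pi ^ 2 : ℂ) - Complex.I * (32 * μ - 4 * Real.pi)) ≠ 0 := by
    intro h
    have := congrArg Complex.re h
    simp [Complex.mul_re, Complex.sub_re, ← Complex.ofReal_pow] at this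
  have hval : NL / DL
      = ((Real.pi ^ 2 : ℂ) + Complex.I * (32 * μ - 4 * Real.pi)) /
        ((Real.pi ^ 2 : ℂ) - Complex.I * (32 * μ - 4 * Real.pi)) := by
    rw [div_eq_div_iff hDLne htd]
    simp only [hNL, hDL]
    push_cast
    ring
  have hmain : Tendsto (fun ε : ℝ => Na μ ε / Da μ ε) (nhds 0) (nhds (NL / DL)) :=
    hN.div hD hDLne
  rw [← hval]
  refine (tendsto_nhdsWithin_of_tendsto_nhds hmain).congr' ?_
  filter_upwards [self_mem_nhdsWithin] with ε hε
  exact (key μ (show ε ≠ 0 from hε)).symm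
end

section
/- For every z₀ with |z₀| = 1 and z₀ ≠ -1, there exists μ ∈ ℝ and a path γ(ε) = (ε, π/2 - ε(π/4) + ε²μ) in ℝ² with γ(ε) → (0, π/2) as ε → 0, such that ℛ(γ(ε)) → z₀ as ε → 0. -/
open Complex Real Filter

/-- slope-style limit from a derivative at `0` of a function vanishing at `0`. -/
lemma tendsto_div_of_hasDerivAt {f : ℝ → ℝ} {d : ℝ} (h0 : f 0 = 0)
    (h : HasDerivAt f d 0) :
    Tendsto (fun ε => f ε / ε) (nhdsWithin 0 {0}ᶜ) (nhds d) := by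
  have h' := hasDerivAt_iff_tendsto_slope.mp h
  refine h'.congr fun ε => ?_
  rw [slope_def_field, h0, sub_zero, sub_zero]

lemma abs_sin_sub_le {x : ℝ} (hx : |x| ≤ 1) : |Real.sin x - x| ≤ |x| ^ 3 := by
  have h := Real.sin_bound hx
  have h2 : |Real.sin x - x| ≤ |Real.sin x - (x - x ^ 3 / 6)| + |x ^ 3 / 6| := by
    have : Real.sin x - x = (Real.sin x - (x - x ^ 3 / 6)) + (-(x ^ 3 / 6)) := by ring
    rw [this]
    exact (abs_add_le _ _).trans (by rw [abs_neg])
  have h3 : |x ^ 3 / 6| = |x| ^ 3 / 6 := by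
    rw [abs_div, _root_.abs_pow]; norm_num
  have h4 : |x| ^ 4 ≤ |x| ^ 3 := by
    have := abs_nonneg x
    nlinarith [pow_nonneg (abs_nonneg x) 3]
  linarith [pow_nonneg (abs_nonneg x) 3, pow_le_pow_of_le_one (abs_nonneg x) hx (by norm_num : 3 ≤ 5)]

lemma div_div_cancel_aux {X Y e : ℂ} (he : e ≠ 0) : (X / e) / (Y / e) = X / Y := by
  rw [div_div_div_cancel_right₀]; exact he

lemma combine_aux {x y z : ℝ} {e : ℂ} (he : e ≠ 0) :
    ((x : ℂ) / e * ((y : ℂ) / e) + Complex.I * ((z : ℂ) / e ^ 2)) /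
      ((x : ℂ) / e * ((y : ℂ) / e) - Complex.I * ((z : ℂ) / e ^ 2)) =
    ((x : ℂ) * (y : ℂ) + Complex.I * (z : ℂ)) /
      ((x : ℂ) * (y : ℂ) - Complex.I * (z : ℂ)) := by
  have he2 : e ^ 2 ≠ 0 := pow_ne_zero 2 he
  have h1 : (x : ℂ) / e * ((y : ℂ) / e) + Complex.I * ((z : ℂ) / e ^ 2)
      = ((x : ℂ) * y + Complex.I * z) / e ^ 2 := by
    field_simp
  have h2 : (x : ℂ) / e * ((y : ℂ) / e) - Complex.I * ((z : ℂ) / e ^ 2)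
      = ((x : ℂ) * y - Complex.I * z) / e ^ 2 := by
    field_simp
  rw [h1, h2, div_div_cancel_aux he2]

theorem exists_path_to_any_point (z₀ : ℂ) (hz : ‖z₀‖ = 1) (hz' : z₀ ≠ -1) :
    ∃ μ : ℝ,
      Tendsto (fun ε : ℝ => ((ε, Real.pi / 2 - ε * (Real.pi / 4) + ε ^ 2 * μ) : ℝ × ℝ))
        (nhdsWithin 0 {0}ᶜ) (nhds (0, Real.pi / 2)) ∧
      Tendsto (fun ε : ℝ => RR ε (Real.pi / 2 - ε * (Real.pi / 4) + ε ^ 2 * μ))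
        (nhdsWithin 0 {0}ᶜ) (nhds z₀) := by
  set a := z₀.re with ha_def
  set b := z₀.im with hb_def
  have hab : a ^ 2 + b ^ 2 = 1 := by
    have h := Complex.sq_norm z₀
    rw [hz] at h
    simpa [Complex.normSq_apply, sq] using h.symm
  have ha : 1 + a ≠ 0 := by
    intro h
    have ha' : a = -1 := by linarith
    have hb : b = 0 := by nlinarith
    exact hz' (Complex.ext (by simp [← ha_def, ha']) (by simp [← hb_def, hb]))
  set t : ℝ := b / (1 + a) with ht_def
  set T : ℝ := Real.pi ^ 2 * t with hT_def
  set μ : ℝ := (T + 4 * Real.pi) / 32 with hμ_def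
  refine ⟨μ, ?_, ?_⟩
  · have hc : Continuous (fun ε : ℝ =>
        ((ε, Real.pi / 2 - ε * (Real.pi / 4) + ε ^ 2 * μ) : ℝ × ℝ)) := by
      fun_prop
    have h0 := hc.tendsto 0
    have : ((0 : ℝ), Real.pi / 2 - 0 * (Real.pi / 4) + (0:ℝ) ^ 2 * μ) = ((0 : ℝ), Real.pi / 2) := by
      norm_num
    rw [this] at h0
    exact h0.mono_left nhdsWithin_le_nhds
  · set kf : ℝ → ℝ := fun ε => Real.pi / 2 - ε * (Real.pi / 4) + ε ^ 2 * μ with hkf_def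
    have hkf0 : kf 0 = Real.pi / 2 := by simp [hkf_def]
    have hk : HasDerivAt kf (-(Real.pi / 4)) 0 := by
      have h1 : HasDerivAt (fun ε : ℝ => ε * (Real.pi / 4)) (Real.pi / 4) 0 := by
        simpa using (hasDerivAt_id (0 : ℝ)).mul_const (Real.pi / 4)
      have h2 : HasDerivAt (fun ε : ℝ => ε ^ 2 * μ) 0 0 := by
        simpa using (hasDerivAt_pow 2 (0 : ℝ)).mul_const μ
      have h3 := (h1.const_sub (Real.pi / 2)).add h2
      rw [add_zero] at h3; exact h3
    -- limit A : cos (kf ε) / ε → π/4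
    have hA : Tendsto (fun ε => Real.cos (kf ε) / ε) (nhdsWithin 0 {0}ᶜ) (nhds (Real.pi / 4)) := by
      apply tendsto_div_of_hasDerivAt (by simp [hkf0])
      have := hk.cos
      rw [hkf0] at this
      simpa using this
    -- limit B : cos (kf ε * (1 + ε)) / ε → -(π/4)
    have hB : Tendsto (fun ε => Real.cos (kf ε * (1 + ε)) / ε) (nhdsWithin 0 {0}ᶜ)
        (nhds (-(Real.pi / 4))) := by
      apply tendsto_div_of_hasDerivAt (by simp [hkf0])
      have hg : HasDerivAt (fun ε : ℝ => kf ε * (1 + ε)) (Real.pi / 4) 0 := by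
        have h1 : HasDerivAt (fun ε : ℝ => 1 + ε) 1 0 := by
          simpa using (hasDerivAt_id (0 : ℝ)).const_add 1
        have := hk.mul h1
        rw [hkf0] at this
        rw [show Real.pi / 4 = -(Real.pi / 4) * (1 + 0) + Real.pi / 2 * 1 by ring]
        exact this
      have := hg.cos
      simp only [hkf0] at this
      norm_num [Real.sin_pi_div_two] at this
      exact this
    -- rewrite for C
    have hCrw : ∀ ε : ℝ, Real.sin (kf ε * (2 + ε)) =
        -Real.sin (ε ^ 2 * (2 * μ - Real.pi / 4 + ε * μ)) := by
      intro ε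
      have : kf ε * (2 + ε) = ε ^ 2 * (2 * μ - Real.pi / 4 + ε * μ) + Real.pi := by
        simp only [hkf_def]; ring
      rw [this, Real.sin_add_pi]
    have hμT : 2 * μ - Real.pi / 4 = T / 16 := by
      rw [hμ_def]; ring
    -- limit C : sin (kf ε * (2+ε)) / ε^2 → -(T/16)
    have hC : Tendsto (fun ε => Real.sin (kf ε * (2 + ε)) / ε ^ 2) (nhdsWithin 0 {0}ᶜ)
        (nhds (-(T / 16))) := by
      set c : ℝ → ℝ := fun ε => 2 * μ - Real.pi / 4 + ε * μ with hc_def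
      have hc0 : c 0 = T / 16 := by simp [hc_def, hμT]
      have hccont : Tendsto c (nhdsWithin 0 {0}ᶜ) (nhds (T / 16)) := by
        have : Continuous c := by fun_prop
        have h0 := this.tendsto 0
        rw [hc0] at h0
        exact h0.mono_left nhdsWithin_le_nhds
      have hdiff : Tendsto (fun ε => Real.sin (ε ^ 2 * c ε) / ε ^ 2 - c ε)
          (nhdsWithin 0 {0}ᶜ) (nhds 0) := by
        have hx0 : Tendsto (fun ε : ℝ => ε ^ 2 * c ε) (nhdsWithin 0 {0}ᶜ) (nhds 0) := by
          have : Continuous (fun ε : ℝ => ε ^ 2 * c ε) := by fun_prop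
          have h0 := this.tendsto 0
          simpa using h0.mono_left nhdsWithin_le_nhds
        have hev : ∀ᶠ ε : ℝ in nhdsWithin 0 {0}ᶜ,
            |(fun ε => Real.sin (ε ^ 2 * c ε) / ε ^ 2 - c ε) ε| ≤ ε ^ 4 * |c ε| ^ 3 := by
          filter_upwards [hx0.eventually (eventually_abs_sub_lt 0 one_pos),
            self_mem_nhdsWithin] with ε hx1 hε
          simp only [sub_zero] at hx1
          have hε0 : ε ≠ 0 := hε
          have hε2 : (0 : ℝ) < ε ^ 2 := by positivity
          have hb := abs_sin_sub_le (le_of_lt hx1)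
          have : Real.sin (ε ^ 2 * c ε) / ε ^ 2 - c ε
              = (Real.sin (ε ^ 2 * c ε) - ε ^ 2 * c ε) / ε ^ 2 := by
            field_simp
          rw [this, abs_div, abs_of_pos hε2, div_le_iff₀ hε2]
          calc |Real.sin (ε ^ 2 * c ε) - ε ^ 2 * c ε| ≤ |ε ^ 2 * c ε| ^ 3 := hb
            _ = ε ^ 4 * |c ε| ^ 3 * ε ^ 2 := by
                rw [_root_.abs_mul, mul_pow, _root_.abs_pow, _root_.sq_abs]; ring
        have hbound : Tendsto (fun ε : ℝ => ε ^ 4 * |c ε| ^ 3) (nhdsWithin 0 {0}ᶜ) (nhds 0) := by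
          have : Continuous (fun ε : ℝ => ε ^ 4 * |c ε| ^ 3) := by fun_prop
          have h0 := this.tendsto 0
          simpa using h0.mono_left nhdsWithin_le_nhds
        exact squeeze_zero_norm' hev hbound
      have hsum := hdiff.add hccont
      rw [zero_add] at hsum
      have hsum' : Tendsto (fun ε => Real.sin (ε ^ 2 * c ε) / ε ^ 2)
          (nhdsWithin 0 {0}ᶜ) (nhds (T / 16)) := by
        refine hsum.congr fun ε => ?_
        ring
      have := hsum'.neg
      refine this.congr fun ε => ?_
      rw [hCrw ε]
      ring
    -- complexified limits
    have hAc : Tendsto (fun ε => ((Real.cos (kf ε) / ε : ℝ) : ℂ)) (nhdsWithin 0 {0}ᶜ)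
        (nhds ((Real.pi / 4 : ℝ) : ℂ)) :=
      (Complex.continuous_ofReal.tendsto _).comp hA
    have hBc : Tendsto (fun ε => ((Real.cos (kf ε * (1 + ε)) / ε : ℝ) : ℂ)) (nhdsWithin 0 {0}ᶜ)
        (nhds ((-(Real.pi / 4) : ℝ) : ℂ)) :=
      (Complex.continuous_ofReal.tendsto _).comp hB
    have hCc : Tendsto (fun ε => ((Real.sin (kf ε * (2 + ε)) / ε ^ 2 : ℝ) : ℂ)) (nhdsWithin 0 {0}ᶜ)
        (nhds ((-(T / 16) : ℝ) : ℂ)) :=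
      (Complex.continuous_ofReal.tendsto _).comp hC
    set N : ℂ := ((Real.pi / 4 : ℝ) : ℂ) * ((-(Real.pi / 4) : ℝ) : ℂ)
        + Complex.I * ((-(T / 16) : ℝ) : ℂ) with hN_def
    set D : ℂ := ((Real.pi / 4 : ℝ) : ℂ) * ((-(Real.pi / 4) : ℝ) : ℂ)
        - Complex.I * ((-(T / 16) : ℝ) : ℂ) with hD_def
    have hNlim : Tendsto (fun ε => ((Real.cos (kf ε) / ε : ℝ) : ℂ)
        * ((Real.cos (kf ε * (1 + ε)) / ε : ℝ) : ℂ)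
        + Complex.I * ((Real.sin (kf ε * (2 + ε)) / ε ^ 2 : ℝ) : ℂ))
        (nhdsWithin 0 {0}ᶜ) (nhds N) :=
      (hAc.mul hBc).add (tendsto_const_nhds.mul hCc)
    have hDlim : Tendsto (fun ε => ((Real.cos (kf ε) / ε : ℝ) : ℂ)
        * ((Real.cos (kf ε * (1 + ε)) / ε : ℝ) : ℂ)
        - Complex.I * ((Real.sin (kf ε * (2 + ε)) / ε ^ 2 : ℝ) : ℂ))
        (nhdsWithin 0 {0}ᶜ) (nhds D) :=
      (hAc.mul hBc).sub (tendsto_const_nhds.mul hCc)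
    have hD0 : D ≠ 0 := by
      intro h
      have hre := congrArg Complex.re h
      simp [hD_def, Complex.mul_re, Complex.mul_im] at hre
    have hdiv := hNlim.div hDlim hD0
    have hND : N / D = z₀ := by
      have hNzD : N = z₀ * D := by
        apply Complex.ext
        · simp only [hN_def, hD_def, Complex.add_re, Complex.sub_re, Complex.mul_re,
            Complex.ofReal_re, Complex.ofReal_im, Complex.I_re, Complex.I_im,
            Complex.add_im, Complex.sub_im, Complex.mul_im, ← ha_def, ← hb_def]
          rw [hT_def, ht_def]
          field_simp
          nlinarith [hab]
        · simp only [hN_def, hD_def, Complex.add_re, Complex.sub_re, Complex.mul_re,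
            Complex.ofReal_re, Complex.ofReal_im, Complex.I_re, Complex.I_im,
            Complex.add_im, Complex.sub_im, Complex.mul_im, ← ha_def, ← hb_def]
          rw [hT_def, ht_def]
          field_simp
          nlinarith [hab]
      rw [hNzD, mul_div_assoc, div_self hD0, mul_one]
    rw [hND] at hdiv
    refine hdiv.congr' ?_
    filter_upwards [self_mem_nhdsWithin] with ε hε
    have hε0 : ε ≠ 0 := hε
    have hεC : ((ε : ℂ)) ≠ 0 := Complex.ofReal_ne_zero.mpr hε0
    have hεC2 : ((ε : ℂ)) ^ 2 ≠ 0 := pow_ne_zero 2 hεC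
    simp only [RR, Pi.div_apply, Complex.ofReal_div, Complex.ofReal_pow]
    exact combine_aux hεC
end

section
/- Let S be an (m+1)×(m+1) complex unitary symmetric matrix indexed by 0,…,m with S_{mm} ≠ -1. Then the m×m matrix 𝔰 = S_{••} - S_{•m}(1 + S_{mm})^{-1} S_{m•}, where S_{••} is the upper-left m×m block, S_{•m} the last column without its last entry, and S_{m•} = S_{•m}ᵀ, is unitary and symmetric. -/
open Matrix

theorem reduced_scattering_unitary_symmetric (m : ℕ)
    (S : Matrix (Fin (m + 1)) (Fin (m + 1)) ℂ)
    (hU : S * Sᴴ = 1) (hSym : S = Sᵀ)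
    (h : S (Fin.last m) (Fin.last m) ≠ -1) :
    let B : Matrix (Fin m) (Fin m) ℂ := fun i j => S i.castSucc j.castSucc
    let c : Fin m → ℂ := fun i => S i.castSucc (Fin.last m)
    let s : Matrix (Fin m) (Fin m) ℂ :=
      B - (1 + S (Fin.last m) (Fin.last m))⁻¹ • Matrix.vecMulVec c c
    s * sᴴ = 1 ∧ s = sᵀ := by
  intro B c s
  set d : ℂ := S (Fin.last m) (Fin.last m) with hdd
  have hsymm : ∀ a b, S a b = S b a := fun a b => by
    nth_rewrite 1 [hSym]; rfl
  have hd : (1 : ℂ) + d ≠ 0 := fun hc => h (by linear_combination hc)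
  have hd' : (1 : ℂ) + starRingEnd ℂ d ≠ 0 := by
    intro hc
    apply hd
    have := congrArg (starRingEnd ℂ) hc
    simpa using this
  have hs : ∀ a b, s a b = B a b - (1 + d)⁻¹ * (c a * c b) := by
    intro a b
    simp only [s, ← hdd, Matrix.sub_apply, Matrix.smul_apply, Matrix.vecMulVec_apply,
      smul_eq_mul]
  constructor
  · ext i j
    have A1 := congrFun (congrFun hU i.castSucc) j.castSucc
    have A2 := congrFun (congrFun hU i.castSucc) (Fin.last m)
    have A3 := congrFun (congrFun hU (Fin.last m)) j.castSucc
    have A4 := congrFun (congrFun hU (Fin.last m)) (Fin.last m)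
    simp only [Matrix.mul_apply, Matrix.conjTranspose_apply, Fin.sum_univ_castSucc,
      Matrix.one_apply, Fin.castSucc_inj, RCLike.star_def] at A1 A2 A3 A4
    rw [if_pos trivial] at A4
    rw [if_neg (Fin.castSucc_lt_last i).ne] at A2
    rw [if_neg (Fin.castSucc_lt_last j).ne'] at A3
    have hlast : ∀ k : Fin m, S (Fin.last m) k.castSucc = c k := fun k => hsymm _ _
    simp only [hlast] at A2 A3 A4
    have hA1 : ∑ k, B i k * starRingEnd ℂ (B j k)
        = (if i = j then (1:ℂ) else 0) - c i * starRingEnd ℂ (c j) := by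
      linear_combination A1
    have hA2 : ∑ k, B i k * starRingEnd ℂ (c k) = - (c i * starRingEnd ℂ d) := by
      linear_combination A2
    have hA3 : ∑ k, c k * starRingEnd ℂ (B j k) = - (d * starRingEnd ℂ (c j)) := by
      linear_combination A3
    have hA4 : ∑ k, c k * starRingEnd ℂ (c k) = 1 - d * starRingEnd ℂ d := by
      linear_combination A4
    have expand : ∀ k : Fin m,
        (B i k - (1 + d)⁻¹ * (c i * c k)) *
          starRingEnd ℂ (B j k - (1 + d)⁻¹ * (c j * c k))
        = B i k * starRingEnd ℂ (B j k)
          - ((1 + starRingEnd ℂ d)⁻¹ * starRingEnd ℂ (c j)) * (B i k * starRingEnd ℂ (c k))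
          - ((1 + d)⁻¹ * c i) * (c k * starRingEnd ℂ (B j k))
          + ((1 + d)⁻¹ * (1 + starRingEnd ℂ d)⁻¹ * (c i * starRingEnd ℂ (c j)))
            * (c k * starRingEnd ℂ (c k)) := by
      intro k
      simp only [_root_.map_sub, _root_.map_mul, _root_.map_inv₀, _root_.map_add, _root_.map_one]
      ring
    rw [Matrix.mul_apply]
    simp only [Matrix.conjTranspose_apply, hs, RCLike.star_def]
    rw [Finset.sum_congr rfl fun k _ => expand k, Finset.sum_add_distrib,
      Finset.sum_sub_distrib, Finset.sum_sub_distrib, ← Finset.mul_sum, ← Finset.mul_sum,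
      ← Finset.mul_sum, hA1, hA2, hA3, hA4, Matrix.one_apply]
    split_ifs <;> field_simp <;> ring
  · ext i j
    rw [Matrix.transpose_apply, hs, hs]
    rw [show B i j = B j i from hsymm _ _]
    ring
end
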